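/- For any u, v ∈ Z_n × Z_n and finite alphabet Σ with |Σ| ≥ 1, the set of configurations shift-symmetric w.r.t. u is contained in the set of configurations shift-symmetric w.r.t. v if and only if ⟨v⟩ is a subgroup of ⟨u⟩. -/

import Mathlib

theorem stmt_11 (n : ℕ) (hn : 1 ≤ n) (A : Type) [Fintype A] (hA : 2 ≤ Fintype.card A)
    (u v : ZMod n × ZMod n) :
    {s : ZMod n × ZMod n → A | ∀ x, s x = s (x + u)} ⊆
        {s : ZMod n × ZMod n → A | ∀ x, s x = s (x + v)} ↔
      AddSubgroup.zmultiples v ≤ AddSubgroup.zmultiples u := by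
  classical
  constructor
  · intro h
    rw [AddSubgroup.zmultiples_le]
    obtain ⟨a, b, hab⟩ := Fintype.exists_pair_of_one_lt_card (α := A) (by omega)
    set s : ZMod n × ZMod n → A :=
      fun x => if x ∈ AddSubgroup.zmultiples u then a else b with hs
    have hsym : s ∈ {s : ZMod n × ZMod n → A | ∀ x, s x = s (x + u)} := by
      intro x
      have : x ∈ AddSubgroup.zmultiples u ↔ x + u ∈ AddSubgroup.zmultiples u := by
        constructor
        · intro hx; exact AddSubgroup.add_mem _ hx (AddSubgroup.mem_zmultiples u)
        · intro hx
          have := AddSubgroup.sub_mem _ hx (AddSubgroup.mem_zmultiples u)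
          simpa using this
      simp only [hs]
      by_cases hx : x ∈ AddSubgroup.zmultiples u
      · rw [if_pos hx, if_pos (this.mp hx)]
      · rw [if_neg hx, if_neg (fun hc => hx (this.mpr hc))]
    have hv := h hsym 0
    simp only [hs, zero_add] at hv
    rw [if_pos (AddSubgroup.zero_mem _)] at hv
    by_contra hc
    rw [if_neg hc] at hv
    exact hab hv
  · intro h s hsu x
    have hv : v ∈ AddSubgroup.zmultiples u := h (AddSubgroup.mem_zmultiples v)
    obtain ⟨k, hk⟩ := hv
    have key : ∀ z : ℤ, ∀ y, s (y + z • u) = s y := by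
      intro z
      induction z using Int.induction_on with
      | zero => simp
      | succ m ih =>
        intro y
        have : y + (m + 1 : ℤ) • u = (y + (m : ℤ) • u) + u := by
          rw [add_smul, one_smul, add_assoc]
        rw [this, ← hsu (y + (m : ℤ) • u), ih]
      | pred m ih =>
        intro y
        have h1 : (y + (-(m : ℤ) - 1) • u) + u = y + (-(m : ℤ)) • u := by
          rw [sub_smul, one_smul]; abel
        rw [← ih y, ← h1, ← hsu]
    rw [← hk, key]
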